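/- Variance estimate by negative dependence (finite-volume version of Proposition 3.1): for every η ∈ Ξ, every t ≥ 0, and every f : V → ℝ, E_η[(Σ_{x∈V} f(x) η_t(x) − Σ_{x∈V} η(x) (P_t f)(x))²] ≤ Σ_{x∈V} η(x) · [P_t(f²)(x) − (P_t f(x))²], where P_t := exp(tA) is the matrix exponential of the single-particle generator A, and E_η[F(η_t)] := Σ_{ξ∈Ξ} (exp(tL))(η,ξ) F(ξ) denotes the expectation of the partial exclusion process started from η, with exp(tL) the matrix exponential of L viewed as a matrix indexed by Ξ. -/

import Mathlib

open scoped BigOperators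

set_option linter.unusedSectionVars false
set_option maxHeartbeats 1000000

/-- Configuration space: at most `α x` particles at each site `x`. -/
abbrev Conf {V : Type*} (α : V → ℕ) : Type _ := ∀ x : V, Fin (α x + 1)

/-- The configuration `η` with one particle moved from `x` to `y`. -/
def move {V : Type*} [DecidableEq V] (α : V → ℕ) (η : Conf α) (x y : V) : Conf α :=
  Function.update
    (Function.update η x ⟨(η x : ℕ) - 1, by have := (η x).isLt; omega⟩)
    y ⟨min ((η y : ℕ) + 1) (α y), by
      have := Nat.min_le_right ((η y : ℕ) + 1) (α y); omega⟩

/-- Jump rate of the partial exclusion process of interacting BTM(a):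
rate for moving a particle from `x` to `y`.  It vanishes if `η x = 0` or
`η y = α y`, so `move` is only effectively used where it is well defined. -/
noncomputable def jumpRate {V : Type*} (α : V → ℕ) (a : ℝ) (η : Conf α) (x y : V) : ℝ :=
  ((η x : ℕ) : ℝ) * (α x : ℝ) ^ (a - 1) * (α y : ℝ) ^ a *
    (1 - ((η y : ℕ) : ℝ) / (α y : ℝ))

/-- The partial exclusion generator `L` in environment `α`. -/
noncomputable def gen {V : Type*} [Fintype V] [DecidableEq V] (α : V → ℕ) (a : ℝ)
    (adj : V → V → Prop) [DecidableRel adj] (φ : Conf α → ℝ) (η : Conf α) : ℝ :=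
  ∑ x : V, ∑ y : V,
    if adj x y then jumpRate α a η x y * (φ (move α η x y) - φ η) else 0

/-- The single-particle (Bouchaud trap model) generator `A`. -/
noncomputable def sgen {V : Type*} [Fintype V] (α : V → ℕ) (a : ℝ)
    (adj : V → V → Prop) [DecidableRel adj] (g : V → ℝ) (x : V) : ℝ :=
  (α x : ℝ) ^ (a - 1) * ∑ y : V, if adj x y then (α y : ℝ) ^ a * (g y - g x) else 0

section MatrixAux

open NormedSpace

variable {n : Type*} [Fintype n] [DecidableEq n]

/-- The entry linear map on matrices. -/
def entryLM (R : Type*) [CommRing R] (i j : n) : Matrix n n R →ₗ[R] R where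
  toFun A := A i j
  map_add' _ _ := rfl
  map_smul' _ _ := rfl

lemma pow_entry_nonneg {N : Matrix n n ℝ} (hN : ∀ i j, 0 ≤ N i j) :
    ∀ (k : ℕ) (i j : n), 0 ≤ (N ^ k) i j := by
  intro k
  induction k with
  | zero => intro i j; simp [Matrix.one_apply]; split <;> norm_num
  | succ k ih =>
    intro i j
    rw [pow_succ, Matrix.mul_apply]
    exact Finset.sum_nonneg fun z _ => mul_nonneg (ih i z) (hN z j)

lemma exp_entry_nonneg_of_nonneg {N : Matrix n n ℝ} (hN : ∀ i j, 0 ≤ N i j) (i j : n) :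
    0 ≤ exp N i j := by
  letI : SeminormedRing (Matrix n n ℝ) := Matrix.linftyOpSemiNormedRing
  letI : NormedRing (Matrix n n ℝ) := Matrix.linftyOpNormedRing
  letI : NormedAlgebra ℝ (Matrix n n ℝ) := Matrix.linftyOpNormedAlgebra
  have hsum : Summable fun k : ℕ => ((k.factorial : ℝ))⁻¹ • N ^ k := expSeries_summable' (𝕂 := ℝ) N
  have hmap := ((entryLM ℝ i j).toContinuousLinearMap).map_tsum hsum
  have : exp N i j = ∑' k : ℕ, ((k.factorial : ℝ))⁻¹ • (N ^ k) i j := by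
    rw [exp_eq_tsum ℝ]
    exact hmap
  rw [this]
  refine tsum_nonneg fun k => ?_
  exact smul_nonneg (by positivity) (pow_entry_nonneg hN k i j)

lemma exp_entry_nonneg {M : Matrix n n ℝ} (hM : ∀ i j, i ≠ j → 0 ≤ M i j) {s : ℝ}
    (hs : 0 ≤ s) (i j : n) : 0 ≤ exp (s • M) i j := by
  letI : SeminormedRing (Matrix n n ℝ) := Matrix.linftyOpSemiNormedRing
  letI : NormedRing (Matrix n n ℝ) := Matrix.linftyOpNormedRing
  letI : NormedAlgebra ℝ (Matrix n n ℝ) := Matrix.linftyOpNormedAlgebra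
  set N := s • M with hNdef
  set c : ℝ := ∑ k : n, |N k k| with hc
  have hck : ∀ k, 0 ≤ N k k + c := by
    intro k
    have h1 : |N k k| ≤ c := Finset.single_le_sum (f := fun k => |N k k|)
      (fun _ _ => abs_nonneg _) (Finset.mem_univ k)
    have := neg_abs_le (N k k)
    linarith
  have hpos : ∀ i j, 0 ≤ (N + c • (1 : Matrix n n ℝ)) i j := by
    intro i j
    by_cases h : i = j
    · subst h
      simpa [Matrix.add_apply, Matrix.smul_apply, Matrix.one_apply] using hck i
    · have : 0 ≤ N i j := smul_nonneg hs (hM i j h)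
      simpa [Matrix.add_apply, Matrix.smul_apply, Matrix.one_apply, h] using this
  have hsplit : exp N
      = exp (N + c • (1 : Matrix n n ℝ)) * exp ((-c) • (1 : Matrix n n ℝ)) := by
    rw [← Matrix.exp_add_of_commute]
    · congr 1
      module
    · exact Commute.symm (Commute.smul_left (Commute.one_left _) _)
  have hexp1 : exp ((-c) • (1 : Matrix n n ℝ)) = Real.exp (-c) • (1 : Matrix n n ℝ) := by
    have : ((-c) • (1 : Matrix n n ℝ)) = algebraMap ℝ (Matrix n n ℝ) (-c) := by
      simp [Algebra.algebraMap_eq_smul_one]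
    rw [this, Matrix.algebraMap_eq_diagonal, Matrix.exp_diagonal]
    simp [Matrix.smul_one_eq_diagonal, Real.exp_eq_exp_ℝ]
  have : exp N i j = Real.exp (-c) * exp (N + c • (1 : Matrix n n ℝ)) i j := by
    rw [hsplit, hexp1, Matrix.mul_smul, Matrix.mul_one, Matrix.smul_apply, smul_eq_mul]
  rw [this]
  exact mul_nonneg (Real.exp_nonneg _) (exp_entry_nonneg_of_nonneg hpos i j)

lemma hasDerivAt_exp_entry (M : Matrix n n ℝ) (s : ℝ) (i j : n) :
    HasDerivAt (fun u : ℝ => exp (u • M) i j) ((exp (s • M) * M) i j) s := by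
  letI : SeminormedRing (Matrix n n ℝ) := Matrix.linftyOpSemiNormedRing
  letI : NormedRing (Matrix n n ℝ) := Matrix.linftyOpNormedRing
  letI : NormedAlgebra ℝ (Matrix n n ℝ) := Matrix.linftyOpNormedAlgebra
  have h := hasDerivAt_exp_smul_const (𝕂 := ℝ) M s
  have h2 := ((entryLM ℝ i j).toContinuousLinearMap).hasFDerivAt.comp_hasDerivAt s h
  exact h2

end MatrixAux

section Alg
variable {V : Type*} [Fintype V] [DecidableEq V] (adj : V → V → Prop) [DecidableRel adj]
  (a : ℝ) (α : V → ℕ)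

lemma sgen_sub (p q : V → ℝ) (x : V) :
    sgen α a adj (fun y => p y - q y) x = sgen α a adj p x - sgen α a adj q x := by
  unfold sgen
  rw [← mul_sub, ← Finset.sum_sub_distrib]
  congr 1
  refine Finset.sum_congr rfl fun y _ => ?_
  split <;> ring

lemma jumpRate_nonneg (hα : ∀ x, 1 ≤ α x) (ξ : Conf α) (x y : V) :
    0 ≤ jumpRate α a ξ x y := by
  unfold jumpRate
  have h1 : (0:ℝ) < (α y : ℝ) := by exact_mod_cast hα y
  have h2 : ((ξ y : ℕ) : ℝ) ≤ (α y : ℝ) := by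
    have := (ξ y).isLt; exact_mod_cast Nat.lt_succ_iff.mp this
  have : ((ξ y : ℕ) : ℝ) / (α y : ℝ) ≤ 1 := (div_le_one h1).mpr h2
  have h3 : (0:ℝ) ≤ 1 - ((ξ y : ℕ) : ℝ) / (α y : ℝ) := by linarith
  positivity

lemma jumpRate_le (hα : ∀ x, 1 ≤ α x) (ξ : Conf α) (x y : V) :
    jumpRate α a ξ x y ≤ ((ξ x : ℕ) : ℝ) * (α x : ℝ) ^ (a - 1) * (α y : ℝ) ^ a := by
  unfold jumpRate
  have h1 : (0:ℝ) < (α y : ℝ) := by exact_mod_cast hα y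
  have h4 : (0:ℝ) ≤ ((ξ y : ℕ) : ℝ) / (α y : ℝ) := by positivity
  have hpre : (0:ℝ) ≤ ((ξ x : ℕ) : ℝ) * (α x : ℝ) ^ (a - 1) * (α y : ℝ) ^ a := by positivity
  nlinarith

lemma move_coe_move (ξ : Conf α) {x y : V} (hxy : x ≠ y) (h1 : 1 ≤ (ξ x : ℕ))
    (h2 : (ξ y : ℕ) < α y) (z : V) :
    (((move α ξ x y) z : ℕ) : ℝ)
      = ((ξ z : ℕ) : ℝ) + (if z = y then 1 else 0) - (if z = x then 1 else 0) := by
  unfold move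
  rcases eq_or_ne z y with rfl | hzy
  · simp [Function.update_self, hxy, Ne.symm hxy,
      Nat.min_eq_left (by omega : (ξ z : ℕ) + 1 ≤ α z)]
  · rcases eq_or_ne z x with rfl | hzx
    · rw [Function.update_of_ne hzy, Function.update_self]
      simp [hzy, Nat.cast_sub h1]
    · rw [Function.update_of_ne hzy, Function.update_of_ne hzx]
      simp [hzy, hzx]

lemma sum_move (ξ : Conf α) {x y : V} (hxy : x ≠ y) (h1 : 1 ≤ (ξ x : ℕ))
    (h2 : (ξ y : ℕ) < α y) (u : V → ℝ) :
    ∑ z : V, u z * (((move α ξ x y) z : ℕ) : ℝ)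
      = ∑ z : V, u z * ((ξ z : ℕ) : ℝ) + u y - u x := by
  have : ∀ z : V, u z * (((move α ξ x y) z : ℕ) : ℝ)
      = u z * ((ξ z : ℕ) : ℝ) + (if z = y then u z else 0) - (if z = x then u z else 0) := by
    intro z
    rw [move_coe_move α ξ hxy h1 h2 z]
    split <;> split <;> ring
  rw [Finset.sum_congr rfl fun z _ => this z]
  rw [Finset.sum_sub_distrib, Finset.sum_add_distrib]
  simp [Finset.sum_ite_eq']

lemma rpow_split (hα : ∀ x, 1 ≤ α x) (y : V) :
    ((α y : ℝ)) ^ a = (α y : ℝ) ^ (a - 1) * (α y : ℝ) := by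
  have h1 : ((α y : ℝ)) ≠ 0 := by
    have : (0:ℝ) < (α y : ℝ) := by exact_mod_cast hα y
    linarith
  rw [← Real.rpow_add_one h1 (a-1), sub_add_cancel]

lemma sum_jump_linear (hsym : ∀ x y, adj x y → adj y x) (hα : ∀ x, 1 ≤ α x)
    (ξ : Conf α) (u : V → ℝ) :
    ∑ x : V, ∑ y : V, (if adj x y then jumpRate α a ξ x y * (u y - u x) else 0)
      = ∑ x : V, ((ξ x : ℕ) : ℝ) * sgen α a adj u x := by
  have hpos : ∀ y, (0:ℝ) < (α y : ℝ) := fun y => by exact_mod_cast hα y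
  have hterm : ∀ x y : V, jumpRate α a ξ x y * (u y - u x)
      = ((ξ x : ℕ) : ℝ) * ((α x:ℝ) ^ (a-1) * ((α y:ℝ) ^ a * (u y - u x)))
        - ((ξ x : ℕ):ℝ) * ((ξ y : ℕ):ℝ) * (α x:ℝ)^(a-1) * (α y:ℝ)^(a-1) * (u y - u x) := by
    intro x y
    unfold jumpRate
    rw [rpow_split a α hα y]
    have := (hpos y).ne'
    field_simp
  have hsplit : ∑ x : V, ∑ y : V, (if adj x y then jumpRate α a ξ x y * (u y - u x) else 0)
      = (∑ x : V, ∑ y : V, (if adj x y then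
          ((ξ x : ℕ) : ℝ) * ((α x:ℝ) ^ (a-1) * ((α y:ℝ) ^ a * (u y - u x))) else 0))
        - ∑ x : V, ∑ y : V, (if adj x y then
          ((ξ x : ℕ):ℝ) * ((ξ y : ℕ):ℝ) * (α x:ℝ)^(a-1) * (α y:ℝ)^(a-1) * (u y - u x) else 0) := by
    rw [← Finset.sum_sub_distrib]
    refine Finset.sum_congr rfl fun x _ => ?_
    rw [← Finset.sum_sub_distrib]
    refine Finset.sum_congr rfl fun y _ => ?_
    split
    · rw [hterm x y]
    · ring
  rw [hsplit]
  have hA2 : (∑ x : V, ∑ y : V, (if adj x y then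
      ((ξ x : ℕ):ℝ) * ((ξ y : ℕ):ℝ) * (α x:ℝ)^(a-1) * (α y:ℝ)^(a-1) * (u y - u x) else 0)) = 0 := by
    set T := ∑ x : V, ∑ y : V, (if adj x y then
          ((ξ x : ℕ):ℝ) * ((ξ y : ℕ):ℝ) * (α x:ℝ)^(a-1) * (α y:ℝ)^(a-1) * (u y - u x) else 0)
      with hT
    have : T = -T := by
      nth_rewrite 1 [hT]
      rw [Finset.sum_comm]
      rw [← Finset.sum_neg_distrib]
      refine Finset.sum_congr rfl fun x _ => ?_
      rw [← Finset.sum_neg_distrib]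
      refine Finset.sum_congr rfl fun y _ => ?_
      by_cases h : adj x y
      · rw [if_pos (hsym x y h), if_pos h]; ring
      · have h' : ¬ adj y x := fun hc => h (hsym y x hc)
        rw [if_neg h', if_neg h]; ring
    linarith
  rw [hA2, sub_zero]
  refine Finset.sum_congr rfl fun x _ => ?_
  unfold sgen
  rw [Finset.mul_sum, Finset.mul_sum]
  refine Finset.sum_congr rfl fun y _ => ?_
  split <;> ring

lemma sq_sgen_identity (u : V → ℝ) (x : V) :
    sgen α a adj (fun y => u y ^ 2) x - 2 * u x * sgen α a adj u x
      = ∑ y : V, (if adj x y then (α x:ℝ)^(a-1) * ((α y:ℝ)^a * (u y - u x)^2) else 0) := by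
  unfold sgen
  simp only [Finset.mul_sum]
  rw [← Finset.sum_sub_distrib]
  refine Finset.sum_congr rfl fun y _ => ?_
  split <;> ring

lemma gen_quad_bound (hsym : ∀ x y, adj x y → adj y x) (hirr : ∀ x, ¬ adj x x)
    (hα : ∀ x, 1 ≤ α x) (u v : V → ℝ) (c : ℝ) (ξ : Conf α) :
    gen α a adj
        (fun ζ => (∑ x : V, u x * ((ζ x : ℕ) : ℝ) - c) ^ 2 + ∑ x : V, ((ζ x : ℕ) : ℝ) * v x) ξ
      ≤ 2 * (∑ x : V, u x * ((ξ x : ℕ) : ℝ) - c) * (∑ x : V, ((ξ x : ℕ) : ℝ) * sgen α a adj u x)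
        + ∑ x : V, ((ξ x : ℕ) : ℝ) * sgen α a adj v x
        + ∑ x : V, ((ξ x : ℕ) : ℝ)
            * (sgen α a adj (fun y => u y ^ 2) x - 2 * u x * sgen α a adj u x) := by
  classical
  set ℓ := ∑ x : V, u x * ((ξ x : ℕ) : ℝ) with hℓ
  have hsummand : ∀ x y : V, adj x y →
      jumpRate α a ξ x y *
        (((∑ z : V, u z * (((move α ξ x y) z : ℕ) : ℝ) - c) ^ 2
            + ∑ z : V, (((move α ξ x y) z : ℕ) : ℝ) * v z)
          - ((ℓ - c) ^ 2 + ∑ z : V, ((ξ z : ℕ) : ℝ) * v z))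
      = 2 * (ℓ - c) * (jumpRate α a ξ x y * (u y - u x))
        + jumpRate α a ξ x y * (u y - u x) ^ 2
        + jumpRate α a ξ x y * (v y - v x) := by
    intro x y hadj
    have hxy : x ≠ y := fun h => hirr x (h ▸ hadj)
    by_cases h0 : (ξ x : ℕ) = 0
    · have : jumpRate α a ξ x y = 0 := by unfold jumpRate; rw [h0]; simp
      rw [this]; ring
    · by_cases hfull : (ξ y : ℕ) = α y
      · have hne : ((α y : ℕ) : ℝ) ≠ 0 := by
          have : (0:ℝ) < (α y : ℝ) := by exact_mod_cast hα y
          linarith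
        have : jumpRate α a ξ x y = 0 := by
          unfold jumpRate; rw [hfull, div_self hne]; simp
        rw [this]; ring
      · have h1 : 1 ≤ (ξ x : ℕ) := Nat.one_le_iff_ne_zero.mpr h0
        have h2 : (ξ y : ℕ) < α y := lt_of_le_of_ne (Nat.lt_succ_iff.mp (ξ y).isLt) hfull
        have hcomm1 : ∑ z : V, (((move α ξ x y) z : ℕ):ℝ) * v z
            = ∑ z : V, v z * (((move α ξ x y) z : ℕ):ℝ) :=
          Finset.sum_congr rfl fun z _ => mul_comm _ _
        have hcomm2 : ∑ z : V, ((ξ z : ℕ):ℝ) * v z = ∑ z : V, v z * ((ξ z:ℕ):ℝ) :=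
          Finset.sum_congr rfl fun z _ => mul_comm _ _
        rw [hcomm1, hcomm2, sum_move α ξ hxy h1 h2 u, sum_move α ξ hxy h1 h2 v]
        ring
  have hgen : gen α a adj
        (fun ζ => (∑ x : V, u x * ((ζ x : ℕ) : ℝ) - c) ^ 2 + ∑ x : V, ((ζ x : ℕ) : ℝ) * v x) ξ
      = 2 * (ℓ - c) * (∑ x : V, ∑ y : V, (if adj x y then jumpRate α a ξ x y * (u y - u x) else 0))
        + (∑ x : V, ∑ y : V, (if adj x y then jumpRate α a ξ x y * (u y - u x) ^ 2 else 0))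
        + (∑ x : V, ∑ y : V, (if adj x y then jumpRate α a ξ x y * (v y - v x) else 0)) := by
    unfold gen
    rw [Finset.mul_sum, ← Finset.sum_add_distrib, ← Finset.sum_add_distrib]
    refine Finset.sum_congr rfl fun x _ => ?_
    rw [Finset.mul_sum, ← Finset.sum_add_distrib, ← Finset.sum_add_distrib]
    refine Finset.sum_congr rfl fun y _ => ?_
    by_cases h : adj x y
    · simp only [if_pos h]
      rw [← hsummand x y h]
    · simp [h]
  rw [hgen, sum_jump_linear adj a α hsym hα ξ u, sum_jump_linear adj a α hsym hα ξ v]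
  have hmid : (∑ x : V, ∑ y : V, (if adj x y then jumpRate α a ξ x y * (u y - u x) ^ 2 else 0))
      ≤ ∑ x : V, ((ξ x : ℕ) : ℝ)
          * (sgen α a adj (fun y => u y ^ 2) x - 2 * u x * sgen α a adj u x) := by
    have : ∀ x : V, ((ξ x : ℕ) : ℝ)
          * (sgen α a adj (fun y => u y ^ 2) x - 2 * u x * sgen α a adj u x)
        = ∑ y : V, (if adj x y then
            ((ξ x : ℕ) : ℝ) * (α x:ℝ)^(a-1) * (α y:ℝ)^a * (u y - u x)^2 else 0) := by
      intro x
      rw [sq_sgen_identity adj a α u x, Finset.mul_sum]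
      refine Finset.sum_congr rfl fun y _ => ?_
      split <;> ring
    rw [Finset.sum_congr rfl fun x _ => this x]
    refine Finset.sum_le_sum fun x _ => Finset.sum_le_sum fun y _ => ?_
    by_cases h : adj x y
    · simp only [if_pos h]
      have hle := jumpRate_le a α hα ξ x y
      have hsq : (0:ℝ) ≤ (u y - u x)^2 := sq_nonneg _
      nlinarith [jumpRate_nonneg a α hα ξ x y]
    · simp [h]
  linarith

end Alg

/-- variance estimate by negative dependence (finite-volume
version of Proposition 3.1).  `ML` is the partial exclusion generator `L`
viewed as a matrix indexed by the configuration space, `MA` is the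
single-particle generator `A` viewed as a matrix indexed by `V`, and
`P_t = exp (t • MA)` acts on functions by matrix-vector multiplication. -/
theorem variance_estimate {V : Type*} [Fintype V] [DecidableEq V]
    (adj : V → V → Prop) [DecidableRel adj]
    (hsym : ∀ x y, adj x y → adj y x) (hirr : ∀ x, ¬ adj x x)
    (a : ℝ) (ha0 : 0 ≤ a) (ha1 : a ≤ 1)
    (α : V → ℕ) (hα : ∀ x, 1 ≤ α x)
    (ML : Matrix (Conf α) (Conf α) ℝ)
    (hML : ∀ (φ : Conf α → ℝ) (η : Conf α), ∑ ξ : Conf α, ML η ξ * φ ξ = gen α a adj φ η)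
    (MA : Matrix V V ℝ)
    (hMA : ∀ (g : V → ℝ) (x : V), ∑ y : V, MA x y * g y = sgen α a adj g x)
    (t : ℝ) (ht : 0 ≤ t) (η : Conf α) (f : V → ℝ) :
    ∑ ξ : Conf α, NormedSpace.exp (t • ML) η ξ *
        (∑ x : V, f x * ((ξ x : ℕ) : ℝ)
          - ∑ x : V, ((η x : ℕ) : ℝ) * Matrix.mulVec (NormedSpace.exp (t • MA)) f x) ^ 2
      ≤ ∑ x : V, ((η x : ℕ) : ℝ) *
          (Matrix.mulVec (NormedSpace.exp (t • MA)) (fun y => f y ^ 2) x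
            - (Matrix.mulVec (NormedSpace.exp (t • MA)) f x) ^ 2) := by
  classical
  -- abbreviations
  set g : ℝ → V → ℝ := fun s x => ∑ y : V, NormedSpace.exp ((t - s) • MA) x y * f y with hgdef
  set w : ℝ → V → ℝ := fun s x => ∑ y : V, NormedSpace.exp ((t - s) • MA) x y * f y ^ 2
    with hwdef
  set c : ℝ := ∑ x : V, ((η x : ℕ) : ℝ) * g 0 x with hcdef
  set Φ : ℝ → Conf α → ℝ := fun s ξ =>
    (∑ x : V, g s x * ((ξ x : ℕ) : ℝ) - c) ^ 2
      + ∑ x : V, ((ξ x : ℕ) : ℝ) * (w s x - g s x ^ 2) with hΦdef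
  set h : ℝ → ℝ := fun s => ∑ ξ : Conf α, NormedSpace.exp (s • ML) η ξ * Φ s ξ with hhdef
  -- derivative of the semigroup applied to a vector
  have hDQ : ∀ (q : V → ℝ) (s : ℝ) (x : V),
      HasDerivAt (fun s : ℝ => ∑ y : V, NormedSpace.exp ((t - s) • MA) x y * q y)
        (-(sgen α a adj (fun z => ∑ y : V, NormedSpace.exp ((t - s) • MA) z y * q y) x)) s := by
    intro q s x
    have hQ : ∀ y : V, HasDerivAt (fun s : ℝ => NormedSpace.exp ((t - s) • MA) x y)
        (-((NormedSpace.exp ((t - s) • MA) * MA) x y)) s := by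
      intro y
      have base := hasDerivAt_exp_entry MA (t - s) x y
      have hin : HasDerivAt (fun s : ℝ => t - s) (-1) s := (hasDerivAt_id s).const_sub t
      have := base.comp s hin
      simpa [Function.comp_def] using this
    have hsum := HasDerivAt.fun_sum (fun y (_ : y ∈ Finset.univ) => (hQ y).mul_const (q y))
    have hkey : ∑ y : V, -((NormedSpace.exp ((t - s) • MA) * MA) x y) * q y
        = -(sgen α a adj (fun z => ∑ y : V, NormedSpace.exp ((t - s) • MA) z y * q y) x) := by
      have hcM : NormedSpace.exp ((t - s) • MA) * MA = MA * NormedSpace.exp ((t - s) • MA) :=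
        (((Commute.refl MA).smul_right (t - s)).exp_right).eq.symm
      rw [hcM, ← hMA (fun z => ∑ y : V, NormedSpace.exp ((t - s) • MA) z y * q y) x,
        ← Finset.sum_neg_distrib]
      have step : ∀ y : V, -((MA * NormedSpace.exp ((t - s) • MA)) x y) * q y
          = ∑ z : V, -(MA x z * (NormedSpace.exp ((t - s) • MA) z y * q y)) := by
        intro y
        rw [neg_mul, Matrix.mul_apply, Finset.sum_mul, ← Finset.sum_neg_distrib]
        exact Finset.sum_congr rfl fun z _ => by ring
      have step2 : ∀ z : V, -(MA x z * ∑ y : V, NormedSpace.exp ((t - s) • MA) z y * q y)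
          = ∑ y : V, -(MA x z * (NormedSpace.exp ((t - s) • MA) z y * q y)) := by
        intro z
        rw [Finset.mul_sum, ← Finset.sum_neg_distrib]
      rw [Finset.sum_congr rfl fun y _ => step y, Finset.sum_congr rfl fun z _ => step2 z,
        Finset.sum_comm]
    rw [← hkey]
    exact hsum
  have hg' : ∀ (s : ℝ) (x : V), HasDerivAt (fun s => g s x) (-(sgen α a adj (g s) x)) s :=
    fun s x => hDQ f s x
  have hw' : ∀ (s : ℝ) (x : V), HasDerivAt (fun s => w s x) (-(sgen α a adj (w s) x)) s :=
    fun s x => hDQ (fun y => f y ^ 2) s x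
  -- derivative of Φ in s
  have hΦ' : ∀ (s : ℝ) (ξ : Conf α), HasDerivAt (fun s => Φ s ξ)
      (2 * (∑ x : V, g s x * ((ξ x : ℕ) : ℝ) - c)
          * (∑ x : V, (-(sgen α a adj (g s) x)) * ((ξ x : ℕ) : ℝ))
        + ∑ x : V, ((ξ x : ℕ) : ℝ)
            * (-(sgen α a adj (w s) x) - 2 * g s x * (-(sgen α a adj (g s) x)))) s := by
    intro s ξ
    have h1 : HasDerivAt (fun s => ∑ x : V, g s x * ((ξ x : ℕ) : ℝ) - c)
        (∑ x : V, (-(sgen α a adj (g s) x)) * ((ξ x : ℕ) : ℝ)) s :=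
      (HasDerivAt.fun_sum fun x _ => (hg' s x).mul_const _).sub_const c
    have h2 := h1.pow 2
    have h3 : ∀ x : V, HasDerivAt (fun s => ((ξ x : ℕ) : ℝ) * (w s x - g s x ^ 2))
        (((ξ x : ℕ) : ℝ) * (-(sgen α a adj (w s) x) - 2 * g s x * (-(sgen α a adj (g s) x)))) s := by
      intro x
      have hgg := (hg' s x).pow 2
      exact ((hw' s x).sub (by simpa [Pi.pow_def] using hgg)).const_mul _
    have h4 := HasDerivAt.fun_sum (fun x (_ : x ∈ Finset.univ) => h3 x)
    have h5 := h2.add h4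
    simpa [pow_one, Pi.pow_def, Pi.add_def] using h5
  -- derivative of h
  have hh' : ∀ s : ℝ, HasDerivAt h
      (∑ ξ : Conf α, ((NormedSpace.exp (s • ML) * ML) η ξ * Φ s ξ
        + NormedSpace.exp (s • ML) η ξ *
          (2 * (∑ x : V, g s x * ((ξ x : ℕ) : ℝ) - c)
              * (∑ x : V, (-(sgen α a adj (g s) x)) * ((ξ x : ℕ) : ℝ))
            + ∑ x : V, ((ξ x : ℕ) : ℝ)
                * (-(sgen α a adj (w s) x) - 2 * g s x * (-(sgen α a adj (g s) x)))))) s := by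
    intro s
    exact HasDerivAt.fun_sum fun ξ _ => (hasDerivAt_exp_entry ML s η ξ).mul (hΦ' s ξ)
  -- ML has nonnegative off-diagonal entries
  have hMLoff : ∀ ζ ξ : Conf α, ζ ≠ ξ → 0 ≤ ML ζ ξ := by
    intro ζ ξ hne
    have hid := hML (fun ρ => if ρ = ξ then (1:ℝ) else 0) ζ
    have hl : ∑ ρ : Conf α, ML ζ ρ * (if ρ = ξ then (1:ℝ) else 0) = ML ζ ξ := by
      simp [mul_ite]
    rw [hl] at hid
    rw [hid]
    unfold gen
    refine Finset.sum_nonneg fun x _ => Finset.sum_nonneg fun y _ => ?_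
    by_cases hxy : adj x y
    · simp only [if_pos hxy, if_neg hne]
      refine mul_nonneg (jumpRate_nonneg a α hα ζ x y) ?_
      split <;> norm_num
    · simp [hxy]
  -- deriv h ≤ 0 on the interior
  have hderiv_le : ∀ s ∈ interior (Set.Icc (0:ℝ) t), deriv h s ≤ 0 := by
    intro s hs
    rw [interior_Icc] at hs
    have hs0 : (0:ℝ) ≤ s := le_of_lt hs.1
    rw [(hh' s).deriv]
    have hflip : ∑ ξ : Conf α, (NormedSpace.exp (s • ML) * ML) η ξ * Φ s ξ
        = ∑ ξ : Conf α, NormedSpace.exp (s • ML) η ξ * gen α a adj (Φ s) ξ := by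
      simp only [Matrix.mul_apply, Finset.sum_mul]
      rw [Finset.sum_comm]
      refine Finset.sum_congr rfl fun ζ _ => ?_
      rw [← hML (Φ s) ζ, Finset.mul_sum]
      exact Finset.sum_congr rfl fun ρ _ => by ring
    rw [Finset.sum_add_distrib, hflip, ← Finset.sum_add_distrib]
    refine Finset.sum_nonpos fun ξ _ => ?_
    rw [← mul_add]
    refine mul_nonpos_of_nonneg_of_nonpos (exp_entry_nonneg hMLoff hs0 η ξ) ?_
    -- pointwise generator inequality
    have hb := gen_quad_bound adj a α hsym hirr hα (g s) (fun x => w s x - g s x ^ 2) c ξ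
    have hΦeq : Φ s = fun ζ => (∑ x : V, g s x * ((ζ x : ℕ) : ℝ) - c) ^ 2
        + ∑ x : V, ((ζ x : ℕ) : ℝ) * (w s x - g s x ^ 2) := rfl
    rw [hΦeq]
    have hsum1 : ∑ x : V, (-(sgen α a adj (g s) x)) * ((ξ x : ℕ) : ℝ)
        = -∑ x : V, ((ξ x : ℕ) : ℝ) * sgen α a adj (g s) x := by
      rw [← Finset.sum_neg_distrib]
      exact Finset.sum_congr rfl fun x _ => by ring
    have hsum2 : ∑ x : V, ((ξ x : ℕ) : ℝ)
          * (-(sgen α a adj (w s) x) - 2 * g s x * (-(sgen α a adj (g s) x)))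
        = -(∑ x : V, ((ξ x : ℕ) : ℝ) * sgen α a adj (fun z => w s z - g s z ^ 2) x)
          - ∑ x : V, ((ξ x : ℕ) : ℝ)
              * (sgen α a adj (fun z => g s z ^ 2) x - 2 * g s x * sgen α a adj (g s) x) := by
      rw [← Finset.sum_neg_distrib, ← Finset.sum_sub_distrib]
      refine Finset.sum_congr rfl fun x _ => ?_
      rw [sgen_sub adj a α (w s) (fun z => g s z ^ 2) x]
      ring
    rw [hsum1, hsum2]
    linarith
  -- antitonicity
  have hcont : ContinuousOn h (Set.Icc (0:ℝ) t) :=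
    fun s _ => ((hh' s).continuousAt).continuousWithinAt
  have hdiff : DifferentiableOn ℝ h (interior (Set.Icc (0:ℝ) t)) :=
    fun s _ => ((hh' s).differentiableAt).differentiableWithinAt
  have hanti := antitoneOn_of_deriv_nonpos (convex_Icc (0:ℝ) t) hcont hdiff hderiv_le
  have hfinal : h t ≤ h 0 :=
    hanti (Set.left_mem_Icc.mpr ht) (Set.right_mem_Icc.mpr ht) ht
  -- identify h t with the LHS and h 0 with the RHS
  have hc_eq : c = ∑ x : V, ((η x : ℕ) : ℝ) * Matrix.mulVec (NormedSpace.exp (t • MA)) f x := by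
    rw [hcdef]
    refine Finset.sum_congr rfl fun x _ => ?_
    congr 1
    simp only [hgdef]
    rw [sub_zero]
    simp [Matrix.mulVec, dotProduct]
  have hQt : NormedSpace.exp ((t - t) • MA) = (1 : Matrix V V ℝ) := by
    rw [sub_self, zero_smul, NormedSpace.exp_zero]
  have hgt : ∀ x : V, g t x = f x := by
    intro x
    simp only [hgdef, hQt, Matrix.one_apply]
    simp
  have hwt : ∀ x : V, w t x = f x ^ 2 := by
    intro x
    simp only [hwdef, hQt, Matrix.one_apply]
    simp
  have hht : h t = ∑ ξ : Conf α, NormedSpace.exp (t • ML) η ξ *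
        (∑ x : V, f x * ((ξ x : ℕ) : ℝ)
          - ∑ x : V, ((η x : ℕ) : ℝ) * Matrix.mulVec (NormedSpace.exp (t • MA)) f x) ^ 2 := by
    simp only [hhdef, hΦdef]
    refine Finset.sum_congr rfl fun ξ _ => ?_
    congr 1
    rw [← hc_eq]
    have hz : ∑ x : V, ((ξ x : ℕ) : ℝ) * (w t x - g t x ^ 2) = 0 := by
      refine Finset.sum_eq_zero fun x _ => ?_
      rw [hgt x, hwt x]; ring
    rw [hz, add_zero]
    congr 2
    exact Finset.sum_congr rfl fun x _ => by rw [hgt x]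
  have hE0 : NormedSpace.exp ((0:ℝ) • ML) = (1 : Matrix (Conf α) (Conf α) ℝ) := by
    rw [zero_smul, NormedSpace.exp_zero]
  have hg0 : ∀ x : V, g 0 x = Matrix.mulVec (NormedSpace.exp (t • MA)) f x := by
    intro x
    simp only [hgdef]
    rw [sub_zero]
    simp [Matrix.mulVec, dotProduct]
  have hw0 : ∀ x : V, w 0 x = Matrix.mulVec (NormedSpace.exp (t • MA)) (fun y => f y ^ 2) x := by
    intro x
    simp only [hwdef]
    rw [sub_zero]
    simp [Matrix.mulVec, dotProduct]
  have hh0 : h 0 = ∑ x : V, ((η x : ℕ) : ℝ) *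
      (Matrix.mulVec (NormedSpace.exp (t • MA)) (fun y => f y ^ 2) x
        - (Matrix.mulVec (NormedSpace.exp (t • MA)) f x) ^ 2) := by
    simp only [hhdef, hE0]
    have hone : ∑ ξ : Conf α, (1 : Matrix (Conf α) (Conf α) ℝ) η ξ * Φ 0 ξ = Φ 0 η := by
      simp [Matrix.one_apply]
    rw [hone]
    simp only [hΦdef]
    have h1 : ∑ x : V, g 0 x * ((η x : ℕ) : ℝ) - c = 0 := by
      rw [hcdef, sub_eq_zero]
      exact Finset.sum_congr rfl fun x _ => mul_comm _ _
    rw [h1]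
    norm_num
    refine Finset.sum_congr rfl fun x _ => ?_
    rw [hg0 x, hw0 x]
  rw [← hht, ← hh0]
  exact hfinal
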